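/- Let A : ℝ^N → ℝ^N be a C¹ vector potential with B_{jk} := ∂_j A_k − ∂_k A_j, let ℏ ∈ (0,1], let v ∈ L²(ℝ^N), and let Y = (y,η), Z = (z,ζ) ∈ ℝ^N × ℝ^N. Then |⟨v^A_ℏ(Z), v^A_ℏ(Y)⟩_{L²}| = | ∫_{ℝ^N} e^{i t·(η−ζ)/√ℏ} e^{-(i/ℏ) Γ^B⟨z + √ℏ t, y, z⟩} conj(v(t)) v(t + (z−y)/√ℏ) dt |. -/

import Mathlib

open MeasureTheory Filter Topology Real

noncomputable section

abbrev Vec (N : ℕ) := Fin N → ℝ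

/-- Circulation `Γ^A[x,y]` of the vector potential `A` along the segment from `x` to `y`. -/
def circA {N : ℕ} (A : Vec N → Vec N) (x y : Vec N) : ℝ :=
  ∫ s in (0:ℝ)..1, ∑ j, (y j - x j) * A (x + s • (y - x)) j

/-- Flux `Γ^B⟨a,b,c⟩` of the magnetic field `B` through the triangle with vertices
`a`, `b`, `c`, given by the standard parametrization. -/
def fluxB {N : ℕ} (B : Fin N → Fin N → Vec N → ℝ) (a b c : Vec N) : ℝ :=
  ∑ j, ∑ k, (b j - a j) * (c k - b k) *
    ∫ μ in (0:ℝ)..1, ∫ ν in (0:ℝ)..1, μ * B j k (a + μ • (b - a) + (μ * ν) • (c - b))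

/-- The magnetic field of a vector potential: `(Bof A) j k = ∂_j A_k - ∂_k A_j`. -/
def Bof {N : ℕ} (A : Vec N → Vec N) (j k : Fin N) (x : Vec N) : ℝ :=
  fderiv ℝ (fun y => A y k) x (Pi.single j 1) - fderiv ℝ (fun y => A y j) x (Pi.single k 1)

/-- The magnetic coherent vector `v^A_ℏ(Z)`, as a function on `ℝ^N`:
`[v^A_ℏ(Z)](x) = ℏ^{-N/4} e^{(i/ℏ)(x-z/2)·ζ} e^{(i/ℏ)Γ^A[z,x]} v((x-z)/√ℏ)`. -/
def cohVec {N : ℕ} (A : Vec N → Vec N) (ℏ : ℝ) (v : Vec N → ℂ) (Z : Vec N × Vec N) :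
    Vec N → ℂ :=
  fun x => (ℏ ^ (-(N:ℝ)/4) : ℝ) *
    Complex.exp (Complex.I / (ℏ:ℂ) * ((∑ j, (x j - Z.1 j / 2) * Z.2 j : ℝ) : ℂ)) *
    Complex.exp (Complex.I / (ℏ:ℂ) * ((circA A Z.1 x : ℝ) : ℂ)) *
    v ((Real.sqrt ℏ)⁻¹ • (x - Z.1))

/-- The `L²` inner product `⟨f,g⟩ = ∫ conj(f) g`, conjugate-linear in the first variable. -/
def l2inner {N : ℕ} (f g : Vec N → ℂ) : ℂ :=
  ∫ x : Vec N, (starRingEnd ℂ) (f x) * g x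

-- ## Auxiliary material
-- auxiliary
def evalCLM {N : ℕ} (w : Vec N) : Vec N →L[ℝ] ℝ :=
  ∑ j, w j • (ContinuousLinearMap.proj j : Vec N →L[ℝ] ℝ)

lemma evalCLM_apply {N : ℕ} (w x : Vec N) : evalCLM w x = ∑ j, w j * x j := by
  simp [evalCLM, ContinuousLinearMap.sum_apply, smul_eq_mul]

lemma circA_rev {N : ℕ} (A : Vec N → Vec N) (x y : Vec N) :
    circA A y x = - circA A x y := by
  have h : circA A y x = ∫ s in (0:ℝ)..1,
      (fun u : ℝ => ∑ j, (x j - y j) * A (y + u • (x - y)) j) (1 - s) := by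
    rw [intervalIntegral.integral_comp_sub_left
      (fun u : ℝ => ∑ j, (x j - y j) * A (y + u • (x - y)) j) 1]
    norm_num [circA]
  rw [h, circA, ← intervalIntegral.integral_neg]
  apply intervalIntegral.integral_congr
  intro s _
  have harg : y + (1 - s) • (x - y) = x + s • (y - x) := by
    funext i; simp [Pi.add_apply, Pi.smul_apply, Pi.sub_apply, smul_eq_mul]; ring
  simp only [harg, ← Finset.sum_neg_distrib]
  exact Finset.sum_congr rfl fun j _ => by ring

section Dlemmas
variable {N : ℕ} {A : Vec N → Vec N} (hA : ContDiff ℝ 1 A)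
include hA

lemma fderiv_coord (x : Vec N) (k : Fin N) (v : Vec N) :
    fderiv ℝ (fun y => A y k) x v = fderiv ℝ A x v k := by
  have hd : HasFDerivAt A (fderiv ℝ A x) x :=
    ((hA.differentiable one_ne_zero) x).hasFDerivAt
  have h : HasFDerivAt (fun y => A y k)
      ((ContinuousLinearMap.proj k : Vec N →L[ℝ] ℝ).comp (fderiv ℝ A x)) x :=
    (ContinuousLinearMap.proj k : Vec N →L[ℝ] ℝ).hasFDerivAt.comp x hd
  rw [h.fderiv]; rfl

lemma Bof_eq (j k : Fin N) (x : Vec N) :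
    Bof A j k x = fderiv ℝ A x (Pi.single j 1) k - fderiv ℝ A x (Pi.single k 1) j := by
  rw [Bof, fderiv_coord hA, fderiv_coord hA]

omit hA in
lemma Bof_antisymm (j k : Fin N) (x : Vec N) : Bof A j k x = - Bof A k j x := by
  simp [Bof, neg_sub]

omit hA in
lemma D_expand (x : Vec N) (u : Vec N) (k : Fin N) :
    fderiv ℝ A x u k = ∑ j, u j * fderiv ℝ A x (Pi.single j 1) k := by
  have h : u = ∑ j, u j • (Pi.single j 1 : Vec N) := by
    funext i
    simp [Finset.sum_apply, Pi.single_apply, Finset.sum_ite_eq', mul_ite]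
  conv_lhs => rw [h]
  rw [map_sum]
  simp [Finset.sum_apply, smul_eq_mul]

lemma curl_identity (x : Vec N) (u w : Vec N) :
    (∑ k, w k * fderiv ℝ A x u k) - (∑ j, u j * fderiv ℝ A x w j)
      = ∑ j, ∑ k, u j * w k * Bof A j k x := by
  have h1 : (∑ k, w k * fderiv ℝ A x u k)
      = ∑ j, ∑ k, u j * w k * fderiv ℝ A x (Pi.single j 1) k :=
    calc ∑ k, w k * fderiv ℝ A x u k
        = ∑ k, ∑ j, w k * (u j * fderiv ℝ A x (Pi.single j 1) k) :=
          Finset.sum_congr rfl fun k _ => by rw [D_expand, Finset.mul_sum]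
      _ = ∑ j, ∑ k, w k * (u j * fderiv ℝ A x (Pi.single j 1) k) := Finset.sum_comm
      _ = ∑ j, ∑ k, u j * w k * fderiv ℝ A x (Pi.single j 1) k :=
          Finset.sum_congr rfl fun j _ => Finset.sum_congr rfl fun k _ => by ring
  have h2 : (∑ j, u j * fderiv ℝ A x w j)
      = ∑ j, ∑ k, u j * w k * fderiv ℝ A x (Pi.single k 1) j :=
    Finset.sum_congr rfl fun j _ => by
      rw [D_expand, Finset.mul_sum]
      exact Finset.sum_congr rfl fun k _ => by ring
  rw [h1, h2, ← Finset.sum_sub_distrib]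
  refine Finset.sum_congr rfl fun j _ => ?_
  rw [← Finset.sum_sub_distrib]
  refine Finset.sum_congr rfl fun k _ => ?_
  rw [Bof_eq hA]; ring

omit hA in
lemma antisym_vanish (x : Vec N) (w : Vec N) :
    ∑ j, ∑ k, w j * w k * Bof A j k x = 0 := by
  have h : (∑ j, ∑ k, w j * w k * Bof A j k x)
      = - ∑ j, ∑ k, w j * w k * Bof A j k x := by
    conv_lhs => rw [Finset.sum_comm]
    rw [← Finset.sum_neg_distrib]
    refine Finset.sum_congr rfl fun j _ => ?_
    rw [← Finset.sum_neg_distrib]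
    refine Finset.sum_congr rfl fun k _ => ?_
    rw [Bof_antisymm (A := A) k j x]; ring
  linarith

lemma Bof_continuous (j k : Fin N) : Continuous (Bof A j k) := by
  have hD : Continuous (fderiv ℝ A) := hA.continuous_fderiv one_ne_zero
  have h1 : Continuous fun x => fderiv ℝ A x (Pi.single j 1) k :=
    (continuous_apply k).comp (hD.clm_apply continuous_const)
  have h2 : Continuous fun x => fderiv ℝ A x (Pi.single k 1) j :=
    (continuous_apply j).comp (hD.clm_apply continuous_const)
  have he : Bof A j k = fun x => fderiv ℝ A x (Pi.single j 1) k
      - fderiv ℝ A x (Pi.single k 1) j := funext fun x => Bof_eq hA j k x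
  rw [he]; exact h1.sub h2

end Dlemmas

namespace StokesAux
variable {N : ℕ}

def Phi (a b c : Vec N) (p : ℝ × ℝ) : Vec N := a + p.1 • (b - a) + (p.1 * p.2) • (c - b)

def PhiD (a b c : Vec N) (p : ℝ × ℝ) : ℝ × ℝ →L[ℝ] Vec N :=
  (ContinuousLinearMap.fst ℝ ℝ ℝ).smulRight (b - a) +
    (p.1 • ContinuousLinearMap.snd ℝ ℝ ℝ + p.2 • ContinuousLinearMap.fst ℝ ℝ ℝ).smulRight (c - b)

lemma Phi_continuous (a b c : Vec N) : Continuous (Phi a b c) := by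
  unfold Phi; fun_prop

lemma hasFDerivAt_Phi (a b c : Vec N) (p : ℝ × ℝ) :
    HasFDerivAt (Phi a b c) (PhiD a b c p) p := by
  have h2 : HasFDerivAt (fun p : ℝ × ℝ => p.1 * p.2)
      (p.1 • ContinuousLinearMap.snd ℝ ℝ ℝ + p.2 • ContinuousLinearMap.fst ℝ ℝ ℝ) p :=
    hasFDerivAt_fst.mul hasFDerivAt_snd
  exact ((hasFDerivAt_fst.smul_const (b - a)).const_add a).add (h2.smul_const (c - b))

lemma PhiD_apply10 (a b c : Vec N) (p : ℝ × ℝ) :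
    PhiD a b c p (1, 0) = (b - a) + p.2 • (c - b) := by
  funext i
  simp [PhiD, Pi.smul_apply, smul_eq_mul]

lemma PhiD_apply01 (a b c : Vec N) (p : ℝ × ℝ) :
    PhiD a b c p (0, 1) = p.1 • (c - b) := by
  funext i
  simp [PhiD, Pi.smul_apply, smul_eq_mul]

/-- the `f` of the divergence theorem -/
def fF (A : Vec N → Vec N) (a b c : Vec N) (p : ℝ × ℝ) : ℝ :=
  p.1 * evalCLM (c - b) (A (Phi a b c p))

def fF' (A : Vec N → Vec N) (a b c : Vec N) (p : ℝ × ℝ) : ℝ × ℝ →L[ℝ] ℝ :=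
  p.1 • (((evalCLM (c - b)).comp (fderiv ℝ A (Phi a b c p))).comp (PhiD a b c p)) +
    evalCLM (c - b) (A (Phi a b c p)) • ContinuousLinearMap.fst ℝ ℝ ℝ

def gF (A : Vec N → Vec N) (a b c : Vec N) (p : ℝ × ℝ) : ℝ :=
  -(evalCLM (b - a) (A (Phi a b c p)) + p.2 * evalCLM (c - b) (A (Phi a b c p)))

def gF' (A : Vec N → Vec N) (a b c : Vec N) (p : ℝ × ℝ) : ℝ × ℝ →L[ℝ] ℝ :=
  -((((evalCLM (b - a)).comp (fderiv ℝ A (Phi a b c p))).comp (PhiD a b c p)) +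
    (p.2 • (((evalCLM (c - b)).comp (fderiv ℝ A (Phi a b c p))).comp (PhiD a b c p)) +
      evalCLM (c - b) (A (Phi a b c p)) • ContinuousLinearMap.snd ℝ ℝ ℝ))

variable {A : Vec N → Vec N} (hA : ContDiff ℝ 1 A) (a b c : Vec N)
include hA

lemma hasFDerivAt_evalA (w : Vec N) (p : ℝ × ℝ) :
    HasFDerivAt (fun q => evalCLM w (A (Phi a b c q)))
      ((((evalCLM w).comp (fderiv ℝ A (Phi a b c p))).comp (PhiD a b c p))) p := by
  exact ((evalCLM w).hasFDerivAt.comp (Phi a b c p)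
    ((hA.differentiable one_ne_zero) (Phi a b c p)).hasFDerivAt).comp p (hasFDerivAt_Phi a b c p)

lemma hasFDerivAt_fF (p : ℝ × ℝ) : HasFDerivAt (fF A a b c) (fF' A a b c p) p :=
  hasFDerivAt_fst.mul (hasFDerivAt_evalA hA a b c (c - b) p)

lemma hasFDerivAt_gF (p : ℝ × ℝ) : HasFDerivAt (gF A a b c) (gF' A a b c p) p :=
  ((hasFDerivAt_evalA hA a b c (b - a) p).add
    (hasFDerivAt_snd.mul (hasFDerivAt_evalA hA a b c (c - b) p))).neg

lemma key (p : ℝ × ℝ) : fF' A a b c p (1, 0) + gF' A a b c p (0, 1)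
    = ∑ j, ∑ k, (b j - a j) * (c k - b k) * (p.1 * Bof A j k (Phi a b c p)) := by
  have h10 := PhiD_apply10 a b c p
  have h01 := PhiD_apply01 a b c p
  simp only [fF', gF', ContinuousLinearMap.add_apply, ContinuousLinearMap.smul_apply,
    ContinuousLinearMap.neg_apply, ContinuousLinearMap.coe_comp', Function.comp_apply,
    h10, h01, _root_.map_smul, smul_eq_mul, ContinuousLinearMap.coe_fst', ContinuousLinearMap.coe_snd']
  simp only [evalCLM_apply, Pi.sub_apply, Pi.add_apply, Pi.smul_apply, smul_eq_mul, mul_one] at *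
  have hcurl := curl_identity hA (Phi a b c p) (b - a + p.2 • (c - b)) (c - b)
  simp only [evalCLM_apply, Pi.sub_apply, Pi.add_apply, Pi.smul_apply, smul_eq_mul] at hcurl
  have hsplit : ∑ j, ∑ k, (b j - a j + p.2 * (c j - b j)) * (c k - b k) * Bof A j k (Phi a b c p)
      = (∑ j, ∑ k, (b j - a j) * (c k - b k) * Bof A j k (Phi a b c p))
        + p.2 * ∑ j, ∑ k, (c j - b j) * (c k - b k) * Bof A j k (Phi a b c p) := by
    rw [Finset.mul_sum, ← Finset.sum_add_distrib]
    refine Finset.sum_congr rfl fun j _ => ?_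
    rw [Finset.mul_sum, ← Finset.sum_add_distrib]
    exact Finset.sum_congr rfl fun k _ => by ring
  have hz : ∑ j, ∑ k, (c j - b j) * (c k - b k) * Bof A j k (Phi a b c p) = 0 := by
    have h0 := antisym_vanish (A := A) (Phi a b c p) (c - b)
    simpa [Pi.sub_apply] using h0
  rw [hsplit, hz, mul_zero, add_zero] at hcurl
  have hR : ∑ j, ∑ k, (b j - a j) * (c k - b k) * (p.1 * Bof A j k (Phi a b c p))
      = p.1 * ∑ j, ∑ k, (b j - a j) * (c k - b k) * Bof A j k (Phi a b c p) := by
    rw [Finset.mul_sum]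
    refine Finset.sum_congr rfl fun j _ => ?_
    rw [Finset.mul_sum]
    exact Finset.sum_congr rfl fun k _ => by ring
  rw [hR, ← hcurl]
  have hsplit2 : ∑ j, (b j - a j + p.2 * (c j - b j)) * fderiv ℝ A (Phi a b c p) (c - b) j
      = (∑ j, (b j - a j) * fderiv ℝ A (Phi a b c p) (c - b) j)
        + p.2 * ∑ j, (c j - b j) * fderiv ℝ A (Phi a b c p) (c - b) j := by
    rw [Finset.mul_sum, ← Finset.sum_add_distrib]
    exact Finset.sum_congr rfl fun j _ => by ring
  rw [hsplit2]
  ring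



theorem stokes : fluxB (Bof A) a b c = circA A a b + circA A b c - circA A a c := by
  have hSc : Continuous fun p : ℝ × ℝ => evalCLM (c - b) (A (Phi a b c p)) :=
    (evalCLM (c - b)).continuous.comp (hA.continuous.comp (Phi_continuous a b c))
  have hTc : Continuous fun p : ℝ × ℝ => evalCLM (b - a) (A (Phi a b c p)) :=
    (evalCLM (b - a)).continuous.comp (hA.continuous.comp (Phi_continuous a b c))
  have hfc : Continuous (fF A a b c) := continuous_fst.mul hSc
  have hgc : Continuous (gF A a b c) := (hTc.add (continuous_snd.mul hSc)).neg
  have hFcont : ∀ j k : Fin N, Continuous fun p : ℝ × ℝ =>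
      (b j - a j) * (c k - b k) * (p.1 * Bof A j k (Phi a b c p)) := fun j k =>
    continuous_const.mul (continuous_fst.mul
      ((Bof_continuous hA j k).comp (Phi_continuous a b c)))
  have hIc : Continuous fun p : ℝ × ℝ => fF' A a b c p (1, 0) + gF' A a b c p (0, 1) := by
    have he : (fun p : ℝ × ℝ => fF' A a b c p (1, 0) + gF' A a b c p (0, 1))
        = fun p => ∑ j, ∑ k, (b j - a j) * (c k - b k) * (p.1 * Bof A j k (Phi a b c p)) :=
      funext (key hA a b c)
    rw [he]
    exact continuous_finset_sum _ fun j _ => continuous_finset_sum _ fun k _ => hFcont j k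
  have hdiv := integral2_divergence_prod_of_hasFDerivAt_off_countable
    (fF A a b c) (gF A a b c) (fF' A a b c) (gF' A a b c) 0 0 1 1 ∅ Set.countable_empty
    hfc.continuousOn hgc.continuousOn
    (fun x _ => hasFDerivAt_fF hA a b c x) (fun x _ => hasFDerivAt_gF hA a b c x)
    (hIc.continuousOn.integrableOn_compact (isCompact_uIcc.prod isCompact_uIcc))
  -- left side equals fluxB
  have hL : (∫ x in (0:ℝ)..1, ∫ y in (0:ℝ)..1,
        fF' A a b c (x, y) (1, 0) + gF' A a b c (x, y) (0, 1)) = fluxB (Bof A) a b c := by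
    have h1 : ∀ x : ℝ, (∫ y in (0:ℝ)..1, fF' A a b c (x, y) (1, 0) + gF' A a b c (x, y) (0, 1))
        = ∑ j, ∑ k, ∫ y in (0:ℝ)..1,
            (b j - a j) * (c k - b k) * (x * Bof A j k (Phi a b c (x, y))) := by
      intro x
      rw [intervalIntegral.integral_congr
        (g := fun y => ∑ j, ∑ k, (b j - a j) * (c k - b k) * (x * Bof A j k (Phi a b c (x, y))))
        (fun y _ => key hA a b c (x, y))]
      rw [intervalIntegral.integral_finset_sum]
      · exact Finset.sum_congr rfl fun j _ => intervalIntegral.integral_finset_sum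
          fun k _ => ((hFcont j k).comp (continuous_const.prodMk continuous_id)).intervalIntegrable 0 1
      · intro j _
        exact (continuous_finset_sum _ fun k _ =>
          ((hFcont j k).comp (continuous_const.prodMk continuous_id))).intervalIntegrable 0 1
    calc (∫ x in (0:ℝ)..1, ∫ y in (0:ℝ)..1,
            fF' A a b c (x, y) (1, 0) + gF' A a b c (x, y) (0, 1))
        = ∫ x in (0:ℝ)..1, ∑ j, ∑ k, ∫ y in (0:ℝ)..1,
            (b j - a j) * (c k - b k) * (x * Bof A j k (Phi a b c (x, y))) :=
          intervalIntegral.integral_congr fun x _ => h1 x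
      _ = ∑ j, ∑ k, ∫ x in (0:ℝ)..1, ∫ y in (0:ℝ)..1,
            (b j - a j) * (c k - b k) * (x * Bof A j k (Phi a b c (x, y))) := by
          have hic : ∀ j k : Fin N, Continuous fun x : ℝ => ∫ y in (0:ℝ)..1,
              (b j - a j) * (c k - b k) * (x * Bof A j k (Phi a b c (x, y))) := fun j k =>
            intervalIntegral.continuous_parametric_intervalIntegral_of_continuous'
              (f := fun x y => (b j - a j) * (c k - b k) * (x * Bof A j k (Phi a b c (x, y))))
              (by exact hFcont j k) 0 1
          rw [intervalIntegral.integral_finset_sum]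
          · exact Finset.sum_congr rfl fun j _ => intervalIntegral.integral_finset_sum
              fun k _ => (hic j k).intervalIntegrable 0 1
          · exact fun j _ => (continuous_finset_sum _ fun k _ => hic j k).intervalIntegrable 0 1
      _ = fluxB (Bof A) a b c := by
          unfold fluxB
          refine Finset.sum_congr rfl fun j _ => Finset.sum_congr rfl fun k _ => ?_
          have hin : ∀ x : ℝ, (∫ y in (0:ℝ)..1,
              (b j - a j) * (c k - b k) * (x * Bof A j k (Phi a b c (x, y))))
              = (b j - a j) * (c k - b k) *
                ∫ y in (0:ℝ)..1, x * Bof A j k (a + x • (b - a) + (x * y) • (c - b)) := by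
            intro x
            rw [intervalIntegral.integral_const_mul]
            rfl
          rw [intervalIntegral.integral_congr (fun x _ => hin x),
            intervalIntegral.integral_const_mul]
  -- boundary terms
  have hb_top : (∫ x in (0:ℝ)..1, gF A a b c (x, 1)) = -circA A a c := by
    rw [circA, ← intervalIntegral.integral_neg]
    apply intervalIntegral.integral_congr
    intro s _
    have hp : Phi a b c (s, 1) = a + s • (c - a) := by
      funext i
      simp only [Phi, Pi.add_apply, Pi.smul_apply, Pi.sub_apply, smul_eq_mul]
      ring
    simp only [gF, hp, evalCLM_apply, Pi.sub_apply, one_mul]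
    rw [← Finset.sum_add_distrib, neg_inj]
    exact Finset.sum_congr rfl fun j _ => by ring
  have hb_bot : (∫ x in (0:ℝ)..1, gF A a b c (x, 0)) = -circA A a b := by
    rw [circA, ← intervalIntegral.integral_neg]
    apply intervalIntegral.integral_congr
    intro s _
    have hp : Phi a b c (s, 0) = a + s • (b - a) := by
      funext i
      simp only [Phi, Pi.add_apply, Pi.smul_apply, Pi.sub_apply, smul_eq_mul]
      ring
    simp only [gF, hp, evalCLM_apply, Pi.sub_apply, zero_mul, mul_zero, add_zero]
  have hb_right : (∫ y in (0:ℝ)..1, fF A a b c (1, y)) = circA A b c := by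
    rw [circA]
    apply intervalIntegral.integral_congr
    intro s _
    have hp : Phi a b c (1, s) = b + s • (c - b) := by
      funext i
      simp only [Phi, Pi.add_apply, Pi.smul_apply, Pi.sub_apply, smul_eq_mul]
      ring
    simp only [fF, hp, evalCLM_apply, Pi.sub_apply, one_mul]
  have hb_left : (∫ y in (0:ℝ)..1, fF A a b c (0, y)) = 0 := by
    have : ∀ s : ℝ, fF A a b c (0, s) = 0 := fun s => by simp [fF]
    rw [intervalIntegral.integral_congr (g := fun _ => (0:ℝ)) (fun s _ => this s)]
    simp
  rw [hL, hb_top, hb_bot, hb_right, hb_left] at hdiv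
  linarith

end StokesAux

lemma exp_arrange (ρ e1 e2 e3 e4 w1 w2 : ℂ) :
    (ρ * Complex.exp e1 * Complex.exp e2 * w1) * (ρ * Complex.exp e3 * Complex.exp e4 * w2)
      = ρ * ρ * Complex.exp (e1 + e2 + e3 + e4) * w1 * w2 := by
  rw [Complex.exp_add, Complex.exp_add, Complex.exp_add]; ring


/-- The modulus of the overlap of two magnetic coherent vectors is given by an integral
involving only the magnetic field `B = dA`. -/
theorem coherent_overlap_formula {N : ℕ} (A : Vec N → Vec N) (hA : ContDiff ℝ 1 A)
    (ℏ : ℝ) (hℏ : ℏ ∈ Set.Ioc (0:ℝ) 1) (v : Vec N → ℂ)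
    (hv : MemLp v 2 (volume : Measure (Vec N))) (Y Z : Vec N × Vec N) :
    ‖l2inner (cohVec A ℏ v Z) (cohVec A ℏ v Y)‖ =
      ‖∫ t : Vec N,
        Complex.exp (Complex.I * (((∑ j, t j * (Y.2 j - Z.2 j)) / Real.sqrt ℏ : ℝ) : ℂ)) *
        Complex.exp (-(Complex.I/(ℏ:ℂ)) *
          ((fluxB (Bof A) (Z.1 + Real.sqrt ℏ • t) Y.1 Z.1 : ℝ) : ℂ)) *
        (starRingEnd ℂ) (v t) * v (t + (Real.sqrt ℏ)⁻¹ • (Z.1 - Y.1))‖ := by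
  obtain ⟨hℏ0, hℏ1⟩ := hℏ
  set s := Real.sqrt ℏ with hsdef
  have hs0 : 0 < s := Real.sqrt_pos.2 hℏ0
  have hs2 : s * s = ℏ := Real.mul_self_sqrt hℏ0.le
  set F : Vec N → ℂ := fun x => (starRingEnd ℂ) (cohVec A ℏ v Z x) * cohVec A ℏ v Y x with hFdef
  set G : Vec N → ℂ := fun t =>
    Complex.exp (Complex.I * (((∑ j, t j * (Y.2 j - Z.2 j)) / s : ℝ) : ℂ)) *
    Complex.exp (-(Complex.I/(ℏ:ℂ)) * ((fluxB (Bof A) (Z.1 + s • t) Y.1 Z.1 : ℝ) : ℂ)) *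
    (starRingEnd ℂ) (v t) * v (t + s⁻¹ • (Z.1 - Y.1)) with hGdef
  -- the constants
  set ρ : ℂ := ((ℏ ^ (-(N:ℝ)/4) : ℝ) : ℂ) with hρdef
  set r0 : ℝ := (∑ j, ((Z.1 j - Y.1 j / 2) * Y.2 j - Z.1 j / 2 * Z.2 j)) + circA A Y.1 Z.1
    with hr0def
  set c0 : ℂ := ρ * ρ * Complex.exp (Complex.I / (ℏ:ℂ) * ((r0 : ℝ) : ℂ)) with hc0def
  -- pointwise identity
  have hpt : ∀ t : Vec N, F (Z.1 + s • t) = c0 * G t := by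
    intro t
    show (starRingEnd ℂ) (cohVec A ℏ v Z (Z.1 + s • t)) * cohVec A ℏ v Y (Z.1 + s • t)
      = c0 * G t
    rw [hGdef, hc0def, hρdef]
    simp only [cohVec]
    rw [← hsdef]
    have hconj : ∀ r : ℝ, (starRingEnd ℂ) (Complex.I / (ℏ:ℂ) * (r:ℂ))
        = -(Complex.I / (ℏ:ℂ)) * (r:ℂ) := fun r => by
      simp [map_div₀, Complex.conj_I, Complex.conj_ofReal, neg_div]
    rw [map_mul, map_mul, map_mul, Complex.conj_ofReal, ← Complex.exp_conj, ← Complex.exp_conj,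
      hconj, hconj]
    have harg1 : s⁻¹ • (Z.1 + s • t - Z.1) = t := by
      rw [add_sub_cancel_left, smul_smul, inv_mul_cancel₀ hs0.ne', one_smul]
    have harg2 : s⁻¹ • (Z.1 + s • t - Y.1) = t + s⁻¹ • (Z.1 - Y.1) := by
      funext i
      simp only [Pi.smul_apply, Pi.add_apply, Pi.sub_apply, smul_eq_mul]
      field_simp
      ring
    rw [harg1, harg2, exp_arrange]
    have hreal1 : (∑ j, ((Z.1 + s • t) j - Y.1 j / 2) * Y.2 j) - (∑ j, ((Z.1 + s • t) j - Z.1 j / 2) * Z.2 j)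
        = s * (∑ j, t j * (Y.2 j - Z.2 j)) + ∑ j, ((Z.1 j - Y.1 j / 2) * Y.2 j - Z.1 j / 2 * Z.2 j) := by
      rw [Finset.mul_sum, ← Finset.sum_sub_distrib, ← Finset.sum_add_distrib]
      refine Finset.sum_congr rfl fun j _ => ?_
      simp only [Pi.add_apply, Pi.smul_apply, smul_eq_mul]
      ring
    have hreal2 : circA A Y.1 (Z.1 + s • t) - circA A Z.1 (Z.1 + s • t) = circA A Y.1 Z.1 - fluxB (Bof A) (Z.1 + s • t) Y.1 Z.1 := by
      have hst := StokesAux.stokes hA (Z.1 + s • t) Y.1 Z.1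
      have h1 := circA_rev A (Z.1 + s • t) Y.1
      have h2 := circA_rev A (Z.1 + s • t) Z.1
      linarith
    have hcr : (∑ j, ((Z.1 + s • t) j - Y.1 j / 2) * Y.2 j) - (∑ j, ((Z.1 + s • t) j - Z.1 j / 2) * Z.2 j) + (circA A Y.1 (Z.1 + s • t) - circA A Z.1 (Z.1 + s • t))
        = r0 + s * (∑ j, t j * (Y.2 j - Z.2 j)) - fluxB (Bof A) (Z.1 + s • t) Y.1 Z.1 := by
      rw [hr0def]; linarith
    have hℏc : (ℏ:ℂ) = (s:ℂ) * (s:ℂ) := by rw [← hs2]; push_cast; ring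
    have hsne : (s:ℂ) ≠ 0 := by exact_mod_cast hs0.ne'
    have hE : -(Complex.I/(ℏ:ℂ)) * (((∑ j, ((Z.1 + s • t) j - Z.1 j / 2) * Z.2 j) : ℝ):ℂ) + -(Complex.I/(ℏ:ℂ)) * ((circA A Z.1 (Z.1 + s • t) : ℝ):ℂ)
          + Complex.I/(ℏ:ℂ) * (((∑ j, ((Z.1 + s • t) j - Y.1 j / 2) * Y.2 j) : ℝ):ℂ) + Complex.I/(ℏ:ℂ) * ((circA A Y.1 (Z.1 + s • t) : ℝ):ℂ)
        = Complex.I / (ℏ:ℂ) * ((r0 : ℝ):ℂ)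
          + Complex.I * ((((∑ j, t j * (Y.2 j - Z.2 j)) / s : ℝ)):ℂ)
          + -(Complex.I/(ℏ:ℂ)) * ((fluxB (Bof A) (Z.1 + s • t) Y.1 Z.1 : ℝ):ℂ) := by
      have hc2 : (((∑ j, ((Z.1 + s • t) j - Y.1 j / 2) * Y.2 j) - (∑ j, ((Z.1 + s • t) j - Z.1 j / 2) * Z.2 j) + (circA A Y.1 (Z.1 + s • t) - circA A Z.1 (Z.1 + s • t)) : ℝ) : ℂ)
          = ((r0 + s * (∑ j, t j * (Y.2 j - Z.2 j)) - fluxB (Bof A) (Z.1 + s • t) Y.1 Z.1 : ℝ) : ℂ) := by exact_mod_cast congrArg Complex.ofReal hcr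
      have step1 : -(Complex.I/(ℏ:ℂ)) * (((∑ j, ((Z.1 + s • t) j - Z.1 j / 2) * Z.2 j) : ℝ):ℂ) + -(Complex.I/(ℏ:ℂ)) * ((circA A Z.1 (Z.1 + s • t) : ℝ):ℂ)
            + Complex.I/(ℏ:ℂ) * (((∑ j, ((Z.1 + s • t) j - Y.1 j / 2) * Y.2 j) : ℝ):ℂ) + Complex.I/(ℏ:ℂ) * ((circA A Y.1 (Z.1 + s • t) : ℝ):ℂ)
          = Complex.I/(ℏ:ℂ) * (((∑ j, ((Z.1 + s • t) j - Y.1 j / 2) * Y.2 j) - (∑ j, ((Z.1 + s • t) j - Z.1 j / 2) * Z.2 j) + (circA A Y.1 (Z.1 + s • t) - circA A Z.1 (Z.1 + s • t)) : ℝ):ℂ) := by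
        push_cast; ring
      have step2 : Complex.I/(ℏ:ℂ) * ((r0 + s * (∑ j, t j * (Y.2 j - Z.2 j)) - fluxB (Bof A) (Z.1 + s • t) Y.1 Z.1 : ℝ):ℂ)
          = Complex.I / (ℏ:ℂ) * ((r0 : ℝ):ℂ)
            + Complex.I * ((((∑ j, t j * (Y.2 j - Z.2 j)) / s : ℝ)):ℂ)
            + -(Complex.I/(ℏ:ℂ)) * ((fluxB (Bof A) (Z.1 + s • t) Y.1 Z.1 : ℝ):ℂ) := by
        push_cast
        rw [hℏc]
        field_simp
        ring
      rw [step1, hc2, step2]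
    rw [hE, Complex.exp_add, Complex.exp_add]
    ring
  -- substitution
  have hsub : (∫ x, F x) = (s ^ N : ℝ) • ∫ t, F (Z.1 + s • t) := by
    have h1 := MeasureTheory.Measure.integral_comp_smul (volume : Measure (Vec N))
      (fun x => F (Z.1 + x)) s
    have h2 : (∫ x : Vec N, F (Z.1 + x)) = ∫ x, F x :=
      MeasureTheory.integral_add_left_eq_self F Z.1
    have hrank : Module.finrank ℝ (Vec N) = N := Module.finrank_fin_fun ℝ
    rw [hrank, h2] at h1
    have habs : |((s ^ N)⁻¹ : ℝ)| = (s ^ N)⁻¹ := abs_of_pos (by positivity)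
    rw [habs] at h1
    have : (fun t : Vec N => F (Z.1 + s • t)) = fun t => (fun x => F (Z.1 + x)) (s • t) := rfl
    rw [show (∫ t : Vec N, F (Z.1 + s • t)) = (s ^ N : ℝ)⁻¹ • ∫ x, F x from h1]
    rw [smul_smul]
    rw [mul_inv_cancel₀ (by positivity : (s:ℝ) ^ N ≠ 0), one_smul]
  -- assemble
  have hG : (∫ t, F (Z.1 + s • t)) = c0 * ∫ t, G t := by
    simp only [hpt]
    exact integral_const_mul c0 G
  have hnorm : ‖l2inner (cohVec A ℏ v Z) (cohVec A ℏ v Y)‖ = ‖∫ t, G t‖ := by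
    have : l2inner (cohVec A ℏ v Z) (cohVec A ℏ v Y) = ∫ x, F x := rfl
    rw [this, hsub, hG, norm_smul, norm_mul, hc0def]
    have hnc : ‖ρ * ρ * Complex.exp (Complex.I / (ℏ:ℂ) * ((r0 : ℝ) : ℂ))‖
        = ℏ ^ (-(N:ℝ)/2) := by
      rw [norm_mul, norm_mul]
      have h1 : ‖ρ‖ = ℏ ^ (-(N:ℝ)/4) := by
        rw [hρdef, Complex.norm_real, Real.norm_eq_abs, abs_of_pos (Real.rpow_pos_of_pos hℏ0 _)]
      have h2 : ‖Complex.exp (Complex.I / (ℏ:ℂ) * ((r0 : ℝ) : ℂ))‖ = 1 := by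
        have he : Complex.I / (ℏ:ℂ) * ((r0 : ℝ) : ℂ) = ((r0 / ℏ : ℝ) : ℂ) * Complex.I := by
          push_cast; ring
        rw [he, Complex.norm_exp_ofReal_mul_I]
      rw [h1, h2, mul_one, ← Real.rpow_add hℏ0]
      congr 1; ring
    rw [hnc]
    have hsN : ‖(s ^ N : ℝ)‖ = ℏ ^ ((N:ℝ)/2) := by
      rw [Real.norm_eq_abs, abs_of_pos (by positivity)]
      rw [hsdef, Real.sqrt_eq_rpow, ← Real.rpow_natCast (ℏ ^ ((1:ℝ)/2)) N,
        ← Real.rpow_mul hℏ0.le]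
      congr 1; ring
    rw [hsN, ← mul_assoc, ← Real.rpow_add hℏ0]
    rw [show ((N:ℝ)/2 + -(N:ℝ)/2) = 0 by ring, Real.rpow_zero, one_mul]
  rw [hnorm]

end
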